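/- Let 0 < τ₁ < ⋯ < τ_M ≤ 1, Q the collocation matrix, and Q_{Δ,m} = diag(τ₁/m, …, τ_M/m). The M commuting-simultaneously-triangularizable matrices I − Q_{Δ,m}⁻¹Q (m = 1,…,M) are simultaneously diagonalizable: in the Vandermonde basis τ⁰, …, τ^{M−1} of ℝ^M, each I − Q_{Δ,m}⁻¹Q is represented by the diagonal matrix diag(1 − m/1, 1 − m/2, …, 1 − m/M). -/

import Mathlib

open Polynomial Matrix Finset

noncomputable def collMat {M : ℕ} (τ : Fin M → ℝ) : Matrix (Fin M) (Fin M) ℝ :=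
  Matrix.of fun i j => ∫ s in (0:ℝ)..(τ i), (Lagrange.basis Finset.univ τ j).eval s

lemma lagrange_sum_pow {M : ℕ} (τ : Fin M → ℝ) (hinj : Function.Injective τ)
    (n : ℕ) (hn : n < M) (t : ℝ) :
    ∑ j : Fin M, τ j ^ n * (Lagrange.basis Finset.univ τ j).eval t = t ^ n := by
  have hvs : Set.InjOn τ (Finset.univ : Finset (Fin M)) := hinj.injOn
  have hdeg : (X ^ n : ℝ[X]).degree < (Finset.univ : Finset (Fin M)).card := by
    simp [Polynomial.degree_X_pow, Nat.cast_lt, hn]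
  have h := Lagrange.eq_interpolate (f := (X ^ n : ℝ[X])) hvs hdeg
  have h2 := congrArg (Polynomial.eval t) h
  simpa [Lagrange.interpolate_apply, Polynomial.eval_finset_sum] using h2.symm

lemma collMat_mulVec {M : ℕ} (τ : Fin M → ℝ) (hinj : Function.Injective τ)
    (n : ℕ) (hn : n < M) :
    (collMat τ).mulVec (fun i => τ i ^ n) =
      fun i => τ i ^ (n + 1) / (n + 1) := by
  funext i
  have hI : ∀ j : Fin M, IntervalIntegrable
      (fun s => (Lagrange.basis Finset.univ τ j).eval s * τ j ^ n)
      MeasureTheory.volume 0 (τ i) := fun j =>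
    ((Lagrange.basis Finset.univ τ j).continuous.mul continuous_const).intervalIntegrable _ _
  calc (collMat τ).mulVec (fun i => τ i ^ n) i
      = ∑ j : Fin M, ∫ s in (0:ℝ)..(τ i),
          (Lagrange.basis Finset.univ τ j).eval s * τ j ^ n := by
        simp [collMat, Matrix.mulVec, dotProduct,
          intervalIntegral.integral_mul_const]
    _ = ∫ s in (0:ℝ)..(τ i), ∑ j : Fin M,
          (Lagrange.basis Finset.univ τ j).eval s * τ j ^ n := by
        rw [intervalIntegral.integral_finset_sum]
        exact fun j _ => hI j
    _ = ∫ s in (0:ℝ)..(τ i), s ^ n := by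
        congr 1
        funext s
        simpa [mul_comm] using lagrange_sum_pow τ hinj n hn s
    _ = τ i ^ (n + 1) / (n + 1) := by simp [integral_pow]

/-- the matrices `I - Q_{Δ,m}⁻¹Q`, `m = 1,…,M`, are simultaneously
diagonalizable in the Vandermonde basis `τ⁰,…,τ^{M-1}`: each basis vector `τⁿ` is an
eigenvector with eigenvalue `1 - m/(n+1)`. -/
theorem simultaneous_diagonalization (M : ℕ) (τ : Fin M → ℝ) (hmono : StrictMono τ)
    (hpos : ∀ i, 0 < τ i) (h1 : ∀ i, τ i ≤ 1) :
    (LinearIndependent ℝ (fun n : Fin M => fun i => τ i ^ (n : ℕ)) ∧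
      Submodule.span ℝ (Set.range (fun n : Fin M => fun i => τ i ^ (n : ℕ))) = ⊤) ∧
    (∀ m : ℕ, 1 ≤ m → m ≤ M → ∀ n : Fin M,
      (1 - (Matrix.diagonal fun i => τ i / m)⁻¹ * collMat τ).mulVec (fun i => τ i ^ (n : ℕ)) =
        (1 - (m : ℝ) / ((n : ℕ) + 1)) • fun i => τ i ^ (n : ℕ)) := by
  have hinj : Function.Injective τ := hmono.injective
  have hli : LinearIndependent ℝ (fun n : Fin M => fun i => τ i ^ (n : ℕ)) := by
    have : (fun n : Fin M => fun i => τ i ^ (n : ℕ)) =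
        fun n => (Matrix.vandermonde τ)ᵀ n := by
      funext n i; simp [Matrix.vandermonde]
    rw [this]
    change LinearIndependent ℝ ((Matrix.vandermonde τ)ᵀ).row
    rw [Matrix.linearIndependent_rows_iff_isUnit, Matrix.isUnit_iff_isUnit_det,
      Matrix.det_transpose, isUnit_iff_ne_zero]
    exact Matrix.det_vandermonde_ne_zero_iff.mpr hinj
  refine ⟨⟨hli, hli.span_eq_top_of_card_eq_finrank' (by simp)⟩, ?_⟩
  intro m hm1 hmM n
  have hm0 : (m : ℝ) ≠ 0 := Nat.cast_ne_zero.mpr (by omega)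
  have hd : ∀ i, τ i / (m : ℝ) ≠ 0 := fun i =>
    div_ne_zero (ne_of_gt (hpos i)) hm0
  have hinvd : (Matrix.diagonal fun i => τ i / (m : ℝ))⁻¹ =
      Matrix.diagonal fun i => (τ i / (m : ℝ))⁻¹ := by
    apply Matrix.inv_eq_right_inv
    rw [Matrix.diagonal_mul_diagonal]
    convert Matrix.diagonal_one with i
    exact mul_inv_cancel₀ (hd i)
  have hQ := collMat_mulVec τ hinj (n : ℕ) n.2
  funext i
  have hn1 : ((n : ℕ) : ℝ) + 1 ≠ 0 := by positivity
  simp only [Matrix.sub_mulVec, Matrix.one_mulVec, ← Matrix.mulVec_mulVec, hQ, hinvd,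
    Pi.sub_apply, Matrix.mulVec_diagonal, Pi.smul_apply, smul_eq_mul]
  have hτ : τ i ≠ 0 := ne_of_gt (hpos i)
  field_simp
  ring
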